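/- Let x₀ > 0 and let f : [x₀, ∞) → ℝ be a nonnegative, nonincreasing function. Assume there are constants C > 0, α > 0 and 0 < β < 1 such that f(y) ≤ C·(y − x)^{−α}·f(x)^β for all y > x ≥ x₀. Then, setting μ = α/(1 − β), one has f(y) ≤ 2^{μ/(1−β)} · ( C^{1/(1−β)} + (2x₀)^μ · f(x₀) ) · y^{−μ} for every y ≥ x₀. -/

import Mathlib

/-- Classical Stampacchia iteration lemma, case β < 1. -/
theorem stampacchia_beta_lt_one
    (x₀ C α β : ℝ) (f : ℝ → ℝ)
    (hx₀ : 0 < x₀) (hC : 0 < C) (hα : 0 < α) (hβ0 : 0 < β) (hβ1 : β < 1)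
    (hnonneg : ∀ x, x₀ ≤ x → 0 ≤ f x)
    (hmono : ∀ x y, x₀ ≤ x → x ≤ y → f y ≤ f x)
    (hiter : ∀ x y, x₀ ≤ x → x < y → f y ≤ C * (y - x) ^ (-α) * f x ^ β) :
    ∀ y, x₀ ≤ y →
      f y ≤ 2 ^ ((α / (1 - β)) / (1 - β)) *
        (C ^ (1 / (1 - β)) + (2 * x₀) ^ (α / (1 - β)) * f x₀) *
        y ^ (-(α / (1 - β))) := by
  have h1β : (0:ℝ) < 1 - β := by linarith
  set μ : ℝ := α / (1 - β) with hμ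
  have hμpos : 0 < μ := div_pos hα h1β
  have hαμ : α = μ * (1 - β) := by rw [hμ, div_mul_cancel₀ _ h1β.ne']
  set K : ℝ := 2 ^ (μ / (1 - β)) * (C ^ (1 / (1 - β)) + (2 * x₀) ^ μ * f x₀) with hKdef
  have hfx₀ : 0 ≤ f x₀ := hnonneg x₀ le_rfl
  have h2x₀ : (0:ℝ) < 2 * x₀ := by linarith
  have hCp : (0:ℝ) < C ^ (1 / (1 - β)) := Real.rpow_pos_of_pos hC _
  have hnn : (0:ℝ) ≤ (2 * x₀) ^ μ * f x₀ :=
    mul_nonneg (Real.rpow_pos_of_pos h2x₀ μ).le hfx₀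
  have hone : (1:ℝ) ≤ 2 ^ (μ / (1 - β)) :=
    Real.one_le_rpow one_le_two (div_pos hμpos h1β).le
  have hKpos : 0 < K := by
    apply mul_pos (Real.rpow_pos_of_pos two_pos _)
    linarith
  have hbaseK : (2 * x₀) ^ μ * f x₀ ≤ K := by
    calc (2 * x₀) ^ μ * f x₀ ≤ C ^ (1 / (1 - β)) + (2 * x₀) ^ μ * f x₀ := by linarith
    _ ≤ K := le_mul_of_one_le_left (by linarith) hone
  -- key self-improvement inequality
  have hkey : C * 2 ^ μ ≤ K ^ (1 - β) := by
    have h1 : 2 ^ (μ / (1 - β)) * C ^ (1 / (1 - β)) ≤ K := by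
      rw [hKdef]
      have h2p : (0:ℝ) < (2:ℝ) ^ (μ / (1 - β)) := Real.rpow_pos_of_pos two_pos _
      nlinarith
    have h2 : (2 ^ (μ / (1 - β)) * C ^ (1 / (1 - β))) ^ (1 - β) ≤ K ^ (1 - β) :=
      Real.rpow_le_rpow (by positivity) h1 h1β.le
    calc C * 2 ^ μ = (2 ^ (μ / (1 - β)) * C ^ (1 / (1 - β))) ^ (1 - β) := by
          rw [Real.mul_rpow (by positivity) (by positivity),
            ← Real.rpow_mul (by norm_num : (0:ℝ) ≤ 2),
            ← Real.rpow_mul hC.le,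
            div_mul_cancel₀ _ h1β.ne', one_div,
            inv_mul_cancel₀ h1β.ne', Real.rpow_one, mul_comm]
    _ ≤ K ^ (1 - β) := h2
  -- base case bound on [x₀, 2x₀]
  have hbase : ∀ z, x₀ ≤ z → z ≤ 2 * x₀ → f z ≤ K * z ^ (-μ) := by
    intro z hz1 hz2
    have hzpos : 0 < z := lt_of_lt_of_le hx₀ hz1
    have h1 : f z ≤ f x₀ := hmono x₀ z le_rfl hz1
    have h2 : f x₀ ≤ K * (2 * x₀) ^ (-μ) := by
      rw [Real.rpow_neg h2x₀.le]
      rw [le_mul_inv_iff₀ (Real.rpow_pos_of_pos h2x₀ μ)]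
      linarith [hbaseK]
    have h3 : (2 * x₀) ^ (-μ) ≤ z ^ (-μ) :=
      Real.rpow_le_rpow_of_nonpos hzpos hz2 (by linarith)
    calc f z ≤ f x₀ := h1
    _ ≤ K * (2 * x₀) ^ (-μ) := h2
    _ ≤ K * z ^ (-μ) := by
        exact mul_le_mul_of_nonneg_left h3 hKpos.le
  -- inductive step
  have hstep : ∀ z, 2 * x₀ ≤ z → f (z / 2) ≤ K * (z / 2) ^ (-μ) → f z ≤ K * z ^ (-μ) := by
    intro z hz hIH
    have hzpos : 0 < z := lt_of_lt_of_le h2x₀ hz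
    have hhalf : 0 < z / 2 := by linarith
    have hx₀half : x₀ ≤ z / 2 := by linarith
    have h1 : f z ≤ C * (z - z / 2) ^ (-α) * f (z / 2) ^ β :=
      hiter (z / 2) z hx₀half (by linarith)
    have hzz : z - z / 2 = z / 2 := by ring
    rw [hzz] at h1
    have h2 : f (z / 2) ^ β ≤ (K * (z / 2) ^ (-μ)) ^ β :=
      Real.rpow_le_rpow (hnonneg _ hx₀half) hIH hβ0.le
    have h3 : f z ≤ C * (z / 2) ^ (-α) * (K * (z / 2) ^ (-μ)) ^ β := by
      refine h1.trans ?_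
      exact mul_le_mul_of_nonneg_left h2 (by positivity)
    have heq : C * (z / 2) ^ (-α) * (K * (z / 2) ^ (-μ)) ^ β
        = (C * 2 ^ μ) * K ^ β * z ^ (-μ) := by
      rw [Real.mul_rpow hKpos.le (by positivity),
        ← Real.rpow_mul hhalf.le]
      have e1 : (z / 2) ^ (-α) * ((z / 2) ^ (-μ * β)) = (z / 2) ^ (-μ) := by
        rw [← Real.rpow_add hhalf]
        congr 1
        rw [hαμ]; ring
      have e2 : (z / 2 : ℝ) ^ (-μ) = 2 ^ μ * z ^ (-μ) := by
        rw [Real.div_rpow hzpos.le (by norm_num : (0:ℝ) ≤ 2),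
          Real.rpow_neg (by norm_num : (0:ℝ) ≤ 2), div_eq_mul_inv, inv_inv, mul_comm]
      calc C * (z / 2) ^ (-α) * (K ^ β * (z / 2) ^ (-μ * β))
          = C * ((z / 2) ^ (-α) * (z / 2) ^ (-μ * β)) * K ^ β := by ring
      _ = C * (z / 2) ^ (-μ) * K ^ β := by rw [e1]
      _ = (C * 2 ^ μ) * K ^ β * z ^ (-μ) := by rw [e2]; ring
    rw [heq] at h3
    refine h3.trans ?_
    have hKK : K ^ (1 - β) * K ^ β = K := by
      rw [← Real.rpow_add hKpos]; norm_num
    have : (C * 2 ^ μ) * K ^ β ≤ K ^ (1 - β) * K ^ β :=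
      mul_le_mul_of_nonneg_right hkey (by positivity)
    rw [hKK] at this
    exact mul_le_mul_of_nonneg_right this (by positivity)
  -- induction over dyadic ranges
  have main : ∀ n : ℕ, ∀ z, x₀ ≤ z → z ≤ 2 ^ (n + 1) * x₀ → f z ≤ K * z ^ (-μ) := by
    intro n
    induction n with
    | zero =>
      intro z hz1 hz2
      exact hbase z hz1 (by norm_num at hz2; linarith)
    | succ n ih =>
      intro z hz1 hz2
      by_cases h : z ≤ 2 * x₀
      · exact hbase z hz1 h
      · push_neg at h
        refine hstep z h.le (ih (z / 2) (by linarith) ?_)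
        have hp : (2:ℝ) ^ (n + 1 + 1) = 2 * 2 ^ (n + 1) := by ring
        rw [hp] at hz2
        linarith
  intro y hy
  obtain ⟨n, hn⟩ := pow_unbounded_of_one_lt (y / x₀) (one_lt_two (α := ℝ))
  have hy2 : y ≤ 2 ^ (n + 1) * x₀ := by
    have h1 : y / x₀ < 2 ^ n := hn
    have h2 : y < 2 ^ n * x₀ := by
      rw [div_lt_iff₀ hx₀] at h1; linarith
    have h3 : (2:ℝ) ^ n ≤ 2 ^ (n + 1) := by
      apply pow_le_pow_right₀ (by norm_num); omega
    nlinarith [hx₀]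
  exact main n y hy hy2
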